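/- Suppose G : Z → X is measurable and injective with measurable inverse on its range. Then for probability measures μ on X and λ on Z, every coupling π of μ and G_*λ arises as (id×G)_*ρ for some coupling ρ of μ and λ; consequently W_c(μ, G_*λ) = inf over couplings ρ of μ and λ of ∫ c(x, G(z)) dρ(x,z). -/

import Mathlib

open MeasureTheory

/-- The Wasserstein cost: infimum of the transport cost over all couplings. -/
noncomputable def Wc {A B : Type*} [MeasurableSpace A] [MeasurableSpace B]
    (c : A × B → ENNReal) (μ : Measure A) (ν : Measure B) : ENNReal :=
  ⨅ π ∈ {π : Measure (A × B) | IsProbabilityMeasure π ∧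
      π.map Prod.fst = μ ∧ π.map Prod.snd = ν},
    ∫⁻ p, c p ∂π

/-- For an injective decoder `G` with measurable inverse on its range
(a measurable embedding), every coupling of `μ` and `G_*λ` arises as the
pushforward of a coupling of `μ` and `λ` under `(x,z) ↦ (x, G z)`; consequently
`W_c(μ, G_*λ)` equals the infimum of `∫ c (x, G z) dρ` over couplings `ρ` of `μ, λ`. -/
theorem wasserstein_eq_encoder_inf {X Z : Type*} [MeasurableSpace X] [MeasurableSpace Z]
    (G : Z → X) (hG : MeasurableEmbedding G)
    (μ : Measure X) (lam : Measure Z) [IsProbabilityMeasure μ] [IsProbabilityMeasure lam]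
    (c : X × X → ENNReal) (hc : Measurable c) :
    (∀ π : Measure (X × X), IsProbabilityMeasure π →
        π.map Prod.fst = μ → π.map Prod.snd = lam.map G →
        ∃ ρ : Measure (X × Z), IsProbabilityMeasure ρ ∧
          ρ.map Prod.fst = μ ∧ ρ.map Prod.snd = lam ∧
          π = ρ.map (fun p => (p.1, G p.2))) ∧
    Wc c μ (lam.map G) =
      ⨅ ρ ∈ {ρ : Measure (X × Z) | IsProbabilityMeasure ρ ∧
          ρ.map Prod.fst = μ ∧ ρ.map Prod.snd = lam},
        ∫⁻ p, c (p.1, G p.2) ∂ρ := by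
  classical
  set F : X × Z → X × X := fun p => (p.1, G p.2) with hFdef
  have hF : MeasurableEmbedding F := MeasurableEmbedding.id.prodMap hG
  have hrange : Set.range F = Prod.snd ⁻¹' Set.range G := by
    ext p
    constructor
    · rintro ⟨q, rfl⟩; exact ⟨q.2, rfl⟩
    · rintro ⟨z, hz⟩
      exact ⟨(p.1, z), by simp [hFdef, hz]⟩
  have key : ∀ π : Measure (X × X), IsProbabilityMeasure π →
      π.map Prod.fst = μ → π.map Prod.snd = lam.map G →
      ∃ ρ : Measure (X × Z), IsProbabilityMeasure ρ ∧
        ρ.map Prod.fst = μ ∧ ρ.map Prod.snd = lam ∧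
        π = ρ.map F := by
    intro π hπ h1 h2
    -- π is concentrated on the range of F
    have hnull : π (Set.range F)ᶜ = 0 := by
      rw [hrange, ← Set.preimage_compl]
      have : π (Prod.snd ⁻¹' (Set.range G)ᶜ) = (π.map Prod.snd) (Set.range G)ᶜ := by
        rw [Measure.map_apply measurable_snd hG.measurableSet_range.compl]
      rw [this, h2, Measure.map_apply hG.measurable hG.measurableSet_range.compl]
      simp
    set ρ : Measure (X × Z) := π.comap F with hρdef
    have hmap : ρ.map F = π := by
      rw [hρdef, hF.map_comap]
      refine Measure.restrict_eq_self_of_ae_mem ?_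
      rw [MeasureTheory.ae_iff]
      convert hnull using 2
      rfl
    have hprob : IsProbabilityMeasure ρ := by
      constructor
      have : ρ Set.univ = (ρ.map F) Set.univ := by
        rw [Measure.map_apply hF.measurable MeasurableSet.univ]; simp
      rw [this, hmap]; exact measure_univ
    have hfst : ρ.map Prod.fst = μ := by
      have : (ρ.map F).map Prod.fst = ρ.map Prod.fst := by
        rw [Measure.map_map measurable_fst hF.measurable]; rfl
      rw [← this, hmap, h1]
    have hsnd : ρ.map Prod.snd = lam := by
      have h3 : (ρ.map Prod.snd).map G = lam.map G := by
        rw [Measure.map_map hG.measurable measurable_snd, ← h2, ← hmap,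
          Measure.map_map measurable_snd hF.measurable]
        rfl
      have := congrArg (Measure.comap G) h3
      rwa [hG.comap_map, hG.comap_map] at this
    exact ⟨ρ, hprob, hfst, hsnd, hmap.symm⟩
  refine ⟨key, ?_⟩
  apply le_antisymm
  · refine le_iInf₂ fun ρ hρ => ?_
    obtain ⟨hρp, hρ1, hρ2⟩ := hρ
    have h1 : (ρ.map F).map Prod.fst = μ := by
      rw [Measure.map_map measurable_fst hF.measurable]; exact hρ1
    have h2 : (ρ.map F).map Prod.snd = lam.map G := by
      rw [Measure.map_map measurable_snd hF.measurable,
        show (Prod.snd ∘ F) = G ∘ Prod.snd from rfl,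
        ← Measure.map_map hG.measurable measurable_snd, hρ2]
    have hprob : IsProbabilityMeasure (ρ.map F) := Measure.isProbabilityMeasure_map
      hF.measurable.aemeasurable
    have : Wc c μ (lam.map G) ≤ ∫⁻ p, c p ∂(ρ.map F) :=
      iInf₂_le (ρ.map F) ⟨hprob, h1, h2⟩
    rwa [lintegral_map hc hF.measurable] at this
  · refine le_iInf₂ fun π hπ => ?_
    obtain ⟨hπp, h1, h2⟩ := hπ
    obtain ⟨ρ, hρp, hρ1, hρ2, hπρ⟩ := key π hπp h1 h2
    have : (⨅ ρ ∈ {ρ : Measure (X × Z) | IsProbabilityMeasure ρ ∧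
          ρ.map Prod.fst = μ ∧ ρ.map Prod.snd = lam},
        ∫⁻ p, c (p.1, G p.2) ∂ρ) ≤ ∫⁻ p, c (p.1, G p.2) ∂ρ :=
      iInf₂_le ρ ⟨hρp, hρ1, hρ2⟩
    rw [hπρ, lintegral_map hc hF.measurable]
    exact this
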